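/- If λ is a partition with e-weight w, then σ_e(λ') = (−1)^{(e−1)w} · σ_e(λ), where λ' is the conjugate partition. -/
import Mathlib


/-- `Reaches e B w t C`: from the bead configuration `B` one removes `w` rim `e`-hooks
(moving a bead from `a` to the vacant `a - e`), with total leg-lengths (beads
crossed) `t`, reaching the `e`-core configuration `C`. -/
inductive Reaches (e : ℕ) : Finset ℕ → ℕ → ℕ → Finset ℕ → Prop
  | core (B : Finset ℕ) (h : ∀ a ∈ B, e ≤ a → a - e ∈ B) : Reaches e B 0 0 B
  | step (B : Finset ℕ) (w t : ℕ) (C : Finset ℕ) (a : ℕ) (ha : a ∈ B) (hea : e ≤ a)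
      (hv : a - e ∉ B)
      (h : Reaches e (insert (a - e) (B.erase a)) w t C) :
      Reaches e B (w + 1) (t + (B.filter (fun b => a - e < b ∧ b < a)).card)  C

/-- The abacus display of the conjugate partition: rotate the display of `λ` (on
positions `0, ..., N-1`) through `π` and interchange beads and vacant positions. -/
def conjDisplay (N : ℕ) (B : Finset ℕ) : Finset ℕ :=
  (Finset.range N \ B).image (fun x => N - 1 - x)

open Finset

def mv (e : ℕ) (B : Finset ℕ) (a : ℕ) : Finset ℕ := insert (a - e) (B.erase a)

def cross (e : ℕ) (B : Finset ℕ) (a : ℕ) : ℕ :=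
  (B.filter (fun b => a - e < b ∧ b < a)).card

lemma reaches_step' (e : ℕ) (B : Finset ℕ) (w t : ℕ) (C : Finset ℕ) (a : ℕ)
    (ha : a ∈ B) (hea : e ≤ a) (hv : a - e ∉ B)
    (h : Reaches e (mv e B a) w t C) :
    Reaches e B (w + 1) (t + cross e B a) C :=
  Reaches.step B w t C a ha hea hv h

lemma exists_reach (e : ℕ) (he : 1 ≤ e) (n : ℕ) :
    ∀ B : Finset ℕ, B.sum id ≤ n → ∃ w t C, Reaches e B w t C := by
  induction n with
  | zero =>
    intro B hB
    refine ⟨0, 0, B, Reaches.core B ?_⟩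
    intro a ha hea
    have : a ≤ B.sum id := Finset.single_le_sum (fun i _ => Nat.zero_le (id i)) ha
    omega
  | succ n ih =>
    intro B hB
    by_cases hcore : ∀ a ∈ B, e ≤ a → a - e ∈ B
    · exact ⟨0, 0, B, Reaches.core B hcore⟩
    · push_neg at hcore
      obtain ⟨a, ha, hea, hv⟩ := hcore
      have hsum : (B.erase a).sum id + a = B.sum id := Finset.sum_erase_add B id ha
      have hmv : (mv e B a).sum id ≤ n := by
        have hni : a - e ∉ B.erase a := fun h => hv (Finset.mem_of_mem_erase h)
        have : (mv e B a).sum id = (a - e) + (B.erase a).sum id := by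
          rw [mv, Finset.sum_insert hni]; rfl
        omega
      obtain ⟨w, t, C, hr⟩ := ih (mv e B a) hmv
      exact ⟨w + 1, t + cross e B a, C, reaches_step' e B w t C a ha hea hv hr⟩

lemma cross_mv (e a a' : ℕ) (B : Finset ℕ) (ha : a ∈ B) (hv : a - e ∉ B) (hne : a' ≠ a) :
    cross e (mv e B a) a' + (if a' - e < a ∧ a < a' then 1 else 0)
      = cross e B a' + (if a' - e < a - e ∧ a - e < a' then 1 else 0) := by
  classical
  have hae : a - e ∉ B.erase a := fun h => hv (Finset.mem_of_mem_erase h)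
  have E1 : ((B.erase a).filter (fun b => a' - e < b ∧ b < a')).card
      + (if a' - e < a ∧ a < a' then 1 else 0)
      = (B.filter (fun b => a' - e < b ∧ b < a')).card := by
    rw [Finset.filter_erase]
    by_cases hpa : a' - e < a ∧ a < a'
    · rw [if_pos hpa,
        Finset.card_erase_of_mem (Finset.mem_filter.2 ⟨ha, hpa⟩)]
      have : 1 ≤ (B.filter (fun b => a' - e < b ∧ b < a')).card :=
        Finset.card_pos.2 ⟨a, Finset.mem_filter.2 ⟨ha, hpa⟩⟩
      omega
    · have hnm : a ∉ B.filter (fun b => a' - e < b ∧ b < a') := by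
        simp only [Finset.mem_filter]; tauto
      rw [if_neg hpa, add_zero, Finset.erase_eq_of_notMem hnm]
  have E2 : cross e (mv e B a) a'
      = ((B.erase a).filter (fun b => a' - e < b ∧ b < a')).card
        + (if a' - e < a - e ∧ a - e < a' then 1 else 0) := by
    rw [cross, mv, Finset.filter_insert]
    by_cases hpe : a' - e < a - e ∧ a - e < a'
    · have hnm : a - e ∉ (B.erase a).filter (fun b => a' - e < b ∧ b < a') := by
        intro h; exact hae (Finset.mem_filter.1 h).1
      rw [if_pos hpe, if_pos hpe, Finset.card_insert_of_notMem hnm]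
    · rw [if_neg hpe, if_neg hpe, add_zero]
  rw [E2, cross]
  omega

lemma mv_comm (e a a' : ℕ) (B : Finset ℕ) (ha : a ∈ B) (ha' : a' ∈ B)
    (hea : e ≤ a) (hea' : e ≤ a') (hv : a - e ∉ B) (hv' : a' - e ∉ B) (hne : a ≠ a') :
    mv e (mv e B a) a' = mv e (mv e B a') a := by
  have h1 : a' ≠ a - e := fun h => hv (h ▸ ha')
  have h2 : a ≠ a' - e := fun h => hv' (h ▸ ha)
  ext x
  simp only [mv, Finset.mem_insert, Finset.mem_erase]
  constructor
  · rintro (rfl | ⟨hx1, (rfl | ⟨hx2, hx3⟩)⟩)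
    · exact Or.inr ⟨Ne.symm h2, Or.inl rfl⟩
    · exact Or.inl rfl
    · exact Or.inr ⟨hx2, Or.inr ⟨hx1, hx3⟩⟩
  · rintro (rfl | ⟨hx1, (rfl | ⟨hx2, hx3⟩)⟩)
    · exact Or.inr ⟨Ne.symm h1, Or.inl rfl⟩
    · exact Or.inl rfl
    · exact Or.inr ⟨hx2, Or.inr ⟨hx1, hx3⟩⟩

lemma reaches_unique (e : ℕ) (he : 1 ≤ e) :
    ∀ w : ℕ, ∀ B t C, Reaches e B w t C →
      ∀ w' t' C', Reaches e B w' t' C' → w = w' ∧ t % 2 = t' % 2 ∧ C = C' := by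
  intro w
  induction w using Nat.strong_induction_on with
  | _ w ih =>
    intro B t C h1 w' t' C' h2
    cases h1 with
    | core _ hcore =>
      cases h2 with
      | core => exact ⟨rfl, rfl, rfl⟩
      | step _ w₁ t₂ C' a' ha' hea' hv' h =>
        exact absurd (hcore a' ha' hea') hv'
    | step _ w₀ t₁ C a ha hea hv r1 =>
      cases h2 with
      | core _ hcore => exact absurd (hcore a ha hea) hv
      | step _ w₁ t₂ C' a' ha' hea' hv' r2 =>
        by_cases hne : a = a'
        · subst hne
          obtain ⟨hw, ht, hC⟩ := ih w₀ (Nat.lt_succ_self _) _ _ _ r1 _ _ _ r2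
          exact ⟨by omega, by omega, hC⟩
        · have h1' : a' ≠ a - e := fun h => hv (h ▸ ha')
          have h2' : a ≠ a' - e := fun h => hv' (h ▸ ha)
          have ha'1 : a' ∈ mv e B a := by
            simp only [mv, Finset.mem_insert, Finset.mem_erase]
            exact Or.inr ⟨Ne.symm hne, ha'⟩
          have hv'1 : a' - e ∉ mv e B a := by
            simp only [mv, Finset.mem_insert, Finset.mem_erase]
            rintro (h | ⟨_, h⟩)
            · omega
            · exact hv' h
          have ha1 : a ∈ mv e B a' := by
            simp only [mv, Finset.mem_insert, Finset.mem_erase]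
            exact Or.inr ⟨hne, ha⟩
          have hv1 : a - e ∉ mv e B a' := by
            simp only [mv, Finset.mem_insert, Finset.mem_erase]
            rintro (h | ⟨_, h⟩)
            · omega
            · exact hv h
          obtain ⟨w₂, t₃, C₃, r3⟩ :=
            exists_reach e he ((mv e (mv e B a) a').sum id) (mv e (mv e B a) a') le_rfl
          have r1' : Reaches e (mv e B a) (w₂ + 1) (t₃ + cross e (mv e B a) a') C₃ :=
            reaches_step' e _ w₂ t₃ C₃ a' ha'1 hea' hv'1 r3
          have r3' : Reaches e (mv e (mv e B a') a) w₂ t₃ C₃ := by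
            rwa [← mv_comm e a a' B ha ha' hea hea' hv hv' hne]
          have r2' : Reaches e (mv e B a') (w₂ + 1) (t₃ + cross e (mv e B a') a) C₃ :=
            reaches_step' e _ w₂ t₃ C₃ a ha1 hea hv1 r3'
          obtain ⟨hwa, hta, hCa⟩ := ih w₀ (Nat.lt_succ_self _) _ _ _ r1 _ _ _ r1'
          obtain ⟨hwb, htb, hCb⟩ := ih (w₂ + 1) (by omega) _ _ _ r2' _ _ _ r2
          refine ⟨by omega, ?_, hCa.trans hCb⟩
          have X1 := cross_mv e a a' B ha hv (Ne.symm hne)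
          have X2 := cross_mv e a' a B ha' hv' hne
          have i1 : (if a' - e < a - e ∧ a - e < a' then 1 else 0)
              = (if a - e < a' ∧ a' < a then 1 else 0) := by
            split_ifs <;> omega
          have i2 : (if a - e < a' - e ∧ a' - e < a then 1 else 0)
              = (if a' - e < a ∧ a < a' then 1 else 0) := by
            split_ifs <;> omega
          rw [i1] at X1
          rw [i2] at X2
          show (t₁ + cross e B a) % 2 = (t₂ + cross e B a') % 2
          omega

lemma mv_subset_range (e N a : ℕ) (B : Finset ℕ) (hB : B ⊆ Finset.range N) (ha : a ∈ B) :
    mv e B a ⊆ Finset.range N := by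
  have haN : a < N := Finset.mem_range.1 (hB ha)
  refine Finset.insert_subset (Finset.mem_range.2 (by omega)) ?_
  exact (Finset.erase_subset a B).trans hB

lemma cross_conj (e N a : ℕ) (B : Finset ℕ) (hB : B ⊆ Finset.range N)
    (ha : a ∈ B) (hea : e ≤ a) :
    cross e (conjDisplay N B) (N - 1 - (a - e)) + cross e B a = e - 1 := by
  classical
  have haN : a < N := Finset.mem_range.1 (hB ha)
  have hconj : cross e (conjDisplay N B) (N - 1 - (a - e))
      = ((Finset.range N \ B).filter (fun b => a - e < b ∧ b < a)).card := by
    rw [cross, conjDisplay, Finset.filter_image]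
    have hinj : Set.InjOn (fun x => N - 1 - x)
        ↑((Finset.range N \ B).filter
          (fun x => N - 1 - (a - e) - e < N - 1 - x ∧ N - 1 - x < N - 1 - (a - e))) := by
      intro x hx y hy hxy
      simp only [Finset.coe_filter, Set.mem_setOf_eq, Finset.mem_sdiff, Finset.mem_range] at hx hy
      simp only at hxy
      omega
    rw [Finset.card_image_of_injOn hinj]
    congr 1
    apply Finset.filter_congr
    intro x hx
    have hxN : x < N := Finset.mem_range.1 (Finset.mem_sdiff.1 hx).1
    constructor <;> intro h <;> exact ⟨by omega, by omega⟩
  have hdisj : Disjoint (B.filter (fun b => a - e < b ∧ b < a))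
      ((Finset.range N \ B).filter (fun b => a - e < b ∧ b < a)) :=
    Finset.disjoint_filter_filter Finset.disjoint_sdiff
  have hsplit : (B.filter (fun b => a - e < b ∧ b < a)).card
      + ((Finset.range N \ B).filter (fun b => a - e < b ∧ b < a)).card
      = ((Finset.range N).filter (fun b => a - e < b ∧ b < a)).card := by
    rw [← Finset.card_union_of_disjoint hdisj, ← Finset.filter_union,
      Finset.union_sdiff_of_subset hB]
  have hrange : ((Finset.range N).filter (fun b => a - e < b ∧ b < a)).card = e - 1 := by
    have heq : (Finset.range N).filter (fun b => a - e < b ∧ b < a) = Finset.Ioo (a - e) a := by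
      ext x
      simp only [Finset.mem_filter, Finset.mem_range, Finset.mem_Ioo]
      omega
    rw [heq, Nat.card_Ioo]
    omega
  rw [hconj, cross]
  omega

lemma conj_core (e N : ℕ) (B : Finset ℕ)
    (h : ∀ a ∈ B, e ≤ a → a - e ∈ B) :
    ∀ d ∈ conjDisplay N B, e ≤ d → d - e ∈ conjDisplay N B := by
  intro d hd hed
  obtain ⟨x, hx, rfl⟩ := Finset.mem_image.1 hd
  obtain ⟨hxN, hxB⟩ := Finset.mem_sdiff.1 hx
  have hxN' : x < N := Finset.mem_range.1 hxN
  refine Finset.mem_image.2 ⟨x + e,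
    Finset.mem_sdiff.2 ⟨Finset.mem_range.2 (by omega), ?_⟩, by omega⟩
  intro hmem
  have := h (x + e) hmem (by omega)
  simp only [Nat.add_sub_cancel] at this
  exact hxB this

lemma conj_mv (e N a : ℕ) (B : Finset ℕ) (hB : B ⊆ Finset.range N)
    (ha : a ∈ B) (hea : e ≤ a) (he : 1 ≤ e) :
    mv e (conjDisplay N B) (N - 1 - (a - e)) = conjDisplay N (mv e B a) := by
  classical
  have haN : a < N := Finset.mem_range.1 (hB ha)
  ext x
  constructor
  · intro hx
    rcases Finset.mem_insert.1 hx with rfl | hx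
    · refine Finset.mem_image.2 ⟨a, Finset.mem_sdiff.2 ⟨Finset.mem_range.2 haN, ?_⟩, by omega⟩
      intro hmem
      rcases Finset.mem_insert.1 hmem with h | h
      · omega
      · exact (Finset.mem_erase.1 h).1 rfl
    · obtain ⟨hne, hx⟩ := Finset.mem_erase.1 hx
      obtain ⟨y, hy, rfl⟩ := Finset.mem_image.1 hx
      obtain ⟨hyN, hyB⟩ := Finset.mem_sdiff.1 hy
      have hyN' : y < N := Finset.mem_range.1 hyN
      have hya : y ≠ a - e := by
        intro h; subst h; exact hne rfl
      refine Finset.mem_image.2 ⟨y, Finset.mem_sdiff.2 ⟨hyN, ?_⟩, rfl⟩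
      intro hmem
      rcases Finset.mem_insert.1 hmem with h | h
      · exact hya h
      · exact hyB (Finset.mem_of_mem_erase h)
  · intro hx
    obtain ⟨y, hy, rfl⟩ := Finset.mem_image.1 hx
    obtain ⟨hyN, hyB⟩ := Finset.mem_sdiff.1 hy
    have hyN' : y < N := Finset.mem_range.1 hyN
    by_cases hya : y = a
    · subst hya
      exact Finset.mem_insert.2 (Or.inl (by omega))
    · have hyB' : y ∉ B := fun h =>
        hyB (Finset.mem_insert.2 (Or.inr (Finset.mem_erase.2 ⟨hya, h⟩)))
      have hyae : y ≠ a - e := fun h => hyB (Finset.mem_insert.2 (Or.inl h))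
      refine Finset.mem_insert.2 (Or.inr (Finset.mem_erase.2 ⟨?_,
        Finset.mem_image.2 ⟨y, Finset.mem_sdiff.2 ⟨hyN, hyB'⟩, rfl⟩⟩))
      intro h
      apply hyae
      omega

lemma conj_reach (e N : ℕ) (he : 1 ≤ e) :
    ∀ B w t C, Reaches e B w t C → B ⊆ Finset.range N →
      t ≤ (e - 1) * w ∧ ∃ C₂, Reaches e (conjDisplay N B) w ((e - 1) * w - t) C₂ := by
  intro B w t C h
  induction h with
  | core B hcore =>
    intro _
    refine ⟨Nat.zero_le _, conjDisplay N B, ?_⟩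
    simpa using Reaches.core (conjDisplay N B) (conj_core e N B hcore)
  | step B w t C a ha hea hv h ih =>
    intro hB
    have haN : a < N := Finset.mem_range.1 (hB ha)
    obtain ⟨hle, C₂, hr⟩ := ih (mv_subset_range e N a B hB ha)
    have hcc := cross_conj e N a B hB ha hea
    have hmul : (e - 1) * (w + 1) = (e - 1) * w + (e - 1) := by ring
    constructor
    · show t + cross e B a ≤ (e - 1) * (w + 1)
      omega
    · refine ⟨C₂, ?_⟩
      have hmem : N - 1 - (a - e) ∈ conjDisplay N B :=
        Finset.mem_image.2 ⟨a - e,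
          Finset.mem_sdiff.2 ⟨Finset.mem_range.2 (by omega), hv⟩, rfl⟩
      have hemem : e ≤ N - 1 - (a - e) := by omega
      have hvac : N - 1 - (a - e) - e ∉ conjDisplay N B := by
        intro hmem'
        obtain ⟨y, hy, hyeq⟩ := Finset.mem_image.1 hmem'
        obtain ⟨hyN, hyB⟩ := Finset.mem_sdiff.1 hy
        have hyN' : y < N := Finset.mem_range.1 hyN
        have : y = a := by omega
        exact hyB (this ▸ ha)
      have h' : Reaches e (mv e (conjDisplay N B) (N - 1 - (a - e))) w ((e - 1) * w - t) C₂ := by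
        rw [conj_mv e N a B hB ha hea he]
        exact hr
      have hstep := reaches_step' e (conjDisplay N B) w ((e - 1) * w - t) C₂
        (N - 1 - (a - e)) hmem hemem hvac h'
      have harith : (e - 1) * (w + 1) - (t + cross e B a)
          = (e - 1) * w - t + cross e (conjDisplay N B) (N - 1 - (a - e)) := by omega
      show Reaches e (conjDisplay N B) (w + 1)
        ((e - 1) * (w + 1) - (t + cross e B a)) C₂
      rw [harith]
      exact hstep

/-- If `λ` is a partition with `e`-weight `w`, then
`σ_e(λ') = (−1)^{(e−1)w} · σ_e(λ)`, where `λ'` is the conjugate partition: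
here `B` is a bead display of `λ`, `conjDisplay N B` one of `λ'`, and
`σ_e = (−1)^{total leg-lengths}` along any removal sequence reaching the `e`-core. -/
theorem sign_of_conjugate (e N : ℕ) (he : 2 ≤ e) (B : Finset ℕ)
    (hB : B ⊆ Finset.range N)
    (w t : ℕ) (C : Finset ℕ) (hreach : Reaches e B w t C)
    (w' t' : ℕ) (C' : Finset ℕ) (hreach' : Reaches e (conjDisplay N B) w' t' C') :
    (-1 : ℤ) ^ t' = (-1 : ℤ) ^ ((e - 1) * w) * (-1 : ℤ) ^ t := by
  obtain ⟨hle, C₂, hc⟩ := conj_reach e N (by omega) B w t C hreach hB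
  obtain ⟨hw, ht, hC⟩ := reaches_unique e (by omega) w _ _ _ hc w' t' C' hreach'
  rw [← pow_add]
  rcases Nat.even_or_odd ((e - 1) * w + t) with hev | hod
  · rw [hev.neg_one_pow]
    have : Even t' := by
      rw [Nat.even_iff]
      rw [Nat.even_iff] at hev
      omega
    rw [this.neg_one_pow]
  · rw [hod.neg_one_pow]
    have : Odd t' := by
      rw [Nat.odd_iff]
      rw [Nat.odd_iff] at hod
      omega
    rw [this.neg_one_pow]
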